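/- (Full-state feedback L2-gain bound.) Let Z be a real Hilbert space, X a linear subspace of Z, A : X → Z a linear map, B₁ : ℝ^r → Z and B₂ : ℝ^m → Z continuous linear maps, C₁ : X → ℝ^p and H : X → ℝ^m linear maps, and D₁ : ℝ^r → ℝ^p, D₂ : ℝ^m → ℝ^p linear maps. Let P₁ : Z → Z be a continuous linear operator that is self-adjoint, coercive, maps X into X with P₁(X) = X (so that by the inverse theorem P₁⁻¹ exists, is continuous, coercive, self-adjoint, and maps X into X). Suppose there exist scalars ε₁ > 0 and γ₁ > 0 such that for all h ∈ X, ω ∈ ℝ^r, and υ ∈ ℝ^p: 2⟨A(P₁h) + B₂(Hh) + B₁ω, h⟩ − γ₁‖ω‖² − γ₁‖υ‖² + 2υᵀ(C₁(P₁h) + D₂(Hh) + D₁ω) ≤ −ε₁‖h‖². Let ω : [0,∞) → ℝ^r be continuous, and let x : [0,∞) → Z be continuously differentiable with x(t) ∈ X for all t ≥ 0, x(0) = 0, and dx/dt(t) = A(x(t)) + B₁(ω(t)) + B₂(u(t)), where u(t) = H(P₁⁻¹x(t)) (well defined since P₁⁻¹x(t) ∈ X). Define z(t) = C₁(x(t))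 + D₂(u(t)) + D₁(ω(t)) and assume z is continuous. Then for every T ≥ 0, ∫₀ᵀ ‖z(t)‖² dt ≤ γ₁² ∫₀ᵀ ‖ω(t)‖² dt. -/

import Mathlib

open RealInnerProductSpace MeasureTheory intervalIntegral

/-- (Full-state feedback L2-gain bound.) Under the operator inequality of
Theorem 2 of the paper, the closed-loop trajectory with full-state feedback
`u(t) = H(P₁⁻¹ x(t))` satisfies the L2-gain bound `‖z‖_{L2} ≤ γ₁ ‖ω‖_{L2}`. -/
theorem fullState_feedback_L2_gain
    {Z : Type*} [NormedAddCommGroup Z] [InnerProductSpace ℝ Z] [CompleteSpace Z]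
    (X : Submodule ℝ Z) {r m p : ℕ}
    (A : X →ₗ[ℝ] Z)
    (B₁ : EuclideanSpace ℝ (Fin r) →L[ℝ] Z) (B₂ : EuclideanSpace ℝ (Fin m) →L[ℝ] Z)
    (C₁ : X →ₗ[ℝ] EuclideanSpace ℝ (Fin p)) (H : X →ₗ[ℝ] EuclideanSpace ℝ (Fin m))
    (D₁ : EuclideanSpace ℝ (Fin r) →ₗ[ℝ] EuclideanSpace ℝ (Fin p))
    (D₂ : EuclideanSpace ℝ (Fin m) →ₗ[ℝ] EuclideanSpace ℝ (Fin p))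
    (P₁ Pinv : Z →L[ℝ] Z)
    -- P₁ is self-adjoint, coercive, maps X into X with P₁(X) = X
    (hP₁sa : ∀ x y : Z, ⟪P₁ x, y⟫ = ⟪x, P₁ y⟫)
    (hP₁coer : ∃ ε > 0, ∀ x : Z, ⟪x, P₁ x⟫ ≥ ε * ‖x‖ ^ 2)
    (hP₁X : ∀ x ∈ X, P₁ x ∈ X)
    (hP₁img : ⇑P₁ '' (X : Set Z) = (X : Set Z))
    -- Pinv is the (continuous) inverse of P₁, which is coercive, self-adjoint and maps X into X
    (hinv1 : ∀ x, Pinv (P₁ x) = x) (hinv2 : ∀ x, P₁ (Pinv x) = x)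
    (hPinvsa : ∀ x y : Z, ⟪Pinv x, y⟫ = ⟪x, Pinv y⟫)
    (hPinvcoer : ∃ δ > 0, ∀ x : Z, ⟪x, Pinv x⟫ ≥ δ * ‖x‖ ^ 2)
    (hPinvX : ∀ x ∈ X, Pinv x ∈ X)
    (ε₁ γ₁ : ℝ) (hε₁ : 0 < ε₁) (hγ₁ : 0 < γ₁)
    -- the operator inequality
    (hdiss : ∀ (h : X) (ω : EuclideanSpace ℝ (Fin r)) (υ : EuclideanSpace ℝ (Fin p)),
      2 * ⟪A ⟨P₁ (h : Z), hP₁X (h : Z) h.2⟩ + B₂ (H h) + B₁ ω, (h : Z)⟫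
        - γ₁ * ‖ω‖ ^ 2 - γ₁ * ‖υ‖ ^ 2
        + 2 * ⟪υ, C₁ ⟨P₁ (h : Z), hP₁X (h : Z) h.2⟩ + D₂ (H h) + D₁ ω⟫
      ≤ -ε₁ * ‖(h : Z)‖ ^ 2)
    -- the closed-loop trajectory
    (ω : ℝ → EuclideanSpace ℝ (Fin r)) (hω : Continuous ω)
    (x : ℝ → Z) (hxX : ∀ t, 0 ≤ t → x t ∈ X) (hx0 : x 0 = 0)
    (u : ℝ → EuclideanSpace ℝ (Fin m))
    (hu : ∀ t, 0 ≤ t → ∀ (hm : Pinv (x t) ∈ X), u t = H ⟨Pinv (x t), hm⟩)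
    (hdyn : ∀ t, 0 ≤ t → ∀ (hm : x t ∈ X),
      HasDerivAt x (A ⟨x t, hm⟩ + B₁ (ω t) + B₂ (u t)) t)
    (z : ℝ → EuclideanSpace ℝ (Fin p))
    (hz : ∀ t, 0 ≤ t → ∀ (hm : x t ∈ X), z t = C₁ ⟨x t, hm⟩ + D₂ (u t) + D₁ (ω t))
    (hzc : Continuous z) :
    ∀ T, 0 ≤ T →
      (∫ t in (0:ℝ)..T, ‖z t‖ ^ 2) ≤ γ₁ ^ 2 * ∫ t in (0:ℝ)..T, ‖ω t‖ ^ 2 := by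

  intro T hT
  obtain ⟨δ, hδ, hδcoer⟩ := hPinvcoer
  set g : ℝ → ℝ := fun t => ⟪x t, Pinv (x t)⟫ +
      γ₁⁻¹ * (∫ s in (0:ℝ)..t, ‖z s‖ ^ 2) - γ₁ * (∫ s in (0:ℝ)..t, ‖ω s‖ ^ 2) with hg
  have hzsq : Continuous fun s => ‖z s‖ ^ 2 := (hzc.norm).pow 2
  have hωsq : Continuous fun s => ‖ω s‖ ^ 2 := (hω.norm).pow 2
  have hIz : ∀ t : ℝ, HasDerivAt (fun t => ∫ s in (0:ℝ)..t, ‖z s‖ ^ 2) (‖z t‖ ^ 2) t := by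
    intro t
    exact intervalIntegral.integral_hasDerivAt_right
      (hzsq.intervalIntegrable 0 t)
      (hzsq.stronglyMeasurableAtFilter _ _) hzsq.continuousAt
  have hIω : ∀ t : ℝ, HasDerivAt (fun t => ∫ s in (0:ℝ)..t, ‖ω s‖ ^ 2) (‖ω t‖ ^ 2) t := by
    intro t
    exact intervalIntegral.integral_hasDerivAt_right
      (hωsq.intervalIntegrable 0 t)
      (hωsq.stronglyMeasurableAtFilter _ _) hωsq.continuousAt
  -- derivative of g at each t ≥ 0
  have hgderiv : ∀ (t : ℝ) (ht : 0 ≤ t),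
      HasDerivAt g
        (2 * ⟪A ⟨x t, hxX t ht⟩ + B₁ (ω t) + B₂ (u t), Pinv (x t)⟫ +
          γ₁⁻¹ * ‖z t‖ ^ 2 - γ₁ * ‖ω t‖ ^ 2) t := by
    intro t ht
    have hm := hxX t ht
    have hx' := hdyn t ht hm
    have hPx' : HasDerivAt (fun s => Pinv (x s))
        (Pinv (A ⟨x t, hm⟩ + B₁ (ω t) + B₂ (u t))) t :=
      Pinv.hasFDerivAt.comp_hasDerivAt t hx'
    have hV := hx'.inner ℝ hPx'
    have hsym : ⟪x t, Pinv (A ⟨x t, hm⟩ + B₁ (ω t) + B₂ (u t))⟫ =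
        ⟪A ⟨x t, hm⟩ + B₁ (ω t) + B₂ (u t), Pinv (x t)⟫ := by
      rw [← hPinvsa]
      exact real_inner_comm _ _
    have hcomb := ((hV.add ((hIz t).const_mul γ₁⁻¹)).sub ((hIω t).const_mul γ₁))
    have heq : (2 * ⟪A ⟨x t, hm⟩ + B₁ (ω t) + B₂ (u t), Pinv (x t)⟫ +
          γ₁⁻¹ * ‖z t‖ ^ 2 - γ₁ * ‖ω t‖ ^ 2) =
        (⟪x t, Pinv (A ⟨x t, hm⟩ + B₁ (ω t) + B₂ (u t))⟫ +
          ⟪A ⟨x t, hm⟩ + B₁ (ω t) + B₂ (u t), Pinv (x t)⟫ +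
          γ₁⁻¹ * ‖z t‖ ^ 2 - γ₁ * ‖ω t‖ ^ 2) := by
      rw [hsym]; ring
    rw [heq]; exact hcomb
  -- g is antitone on [0, T]
  have hganti : AntitoneOn g (Set.Icc 0 T) := by
    apply antitoneOn_of_deriv_nonpos (convex_Icc 0 T)
    · intro t ht
      exact ((hgderiv t ht.1).continuousAt).continuousWithinAt
    · intro t ht
      rw [interior_Icc] at ht
      exact ((hgderiv t ht.1.le).differentiableAt).differentiableWithinAt
    · intro t ht
      rw [interior_Icc] at ht
      have ht0 : (0:ℝ) ≤ t := ht.1.le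
      rw [(hgderiv t ht0).deriv]
      have hmX : Pinv (x t) ∈ X := hPinvX _ (hxX t ht0)
      have key := hdiss ⟨Pinv (x t), hmX⟩ (ω t) (γ₁⁻¹ • z t)
      have hPh : (⟨P₁ ((⟨Pinv (x t), hmX⟩ : X) : Z),
          hP₁X _ (⟨Pinv (x t), hmX⟩ : X).2⟩ : X) = ⟨x t, hxX t ht0⟩ := by
        apply Subtype.ext
        simp [hinv2]
      rw [hPh] at key
      rw [show H (⟨Pinv (x t), hmX⟩ : X) = u t from (hu t ht0 hmX).symm] at key
      rw [show ((⟨Pinv (x t), hmX⟩ : X) : Z) = Pinv (x t) from rfl] at key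
      rw [show A (⟨x t, hxX t ht0⟩ : X) + B₂ (u t) + B₁ (ω t)
          = A ⟨x t, hxX t ht0⟩ + B₁ (ω t) + B₂ (u t) from by abel] at key
      have hnsmul : ‖γ₁⁻¹ • z t‖ ^ 2 = γ₁⁻¹ ^ 2 * ‖z t‖ ^ 2 := by
        rw [norm_smul, Real.norm_eq_abs, abs_of_pos (inv_pos.mpr hγ₁)]
        ring
      have hinsmul : ⟪γ₁⁻¹ • z t, C₁ (⟨x t, hxX t ht0⟩ : X) + D₂ (u t) + D₁ (ω t)⟫ =
          γ₁⁻¹ * ‖z t‖ ^ 2 := by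
        rw [real_inner_smul_left, ← hz t ht0 (hxX t ht0), real_inner_self_eq_norm_sq]
      rw [hnsmul, hinsmul] at key
      rw [show γ₁ * (γ₁⁻¹ ^ 2 * ‖z t‖ ^ 2) = γ₁⁻¹ * ‖z t‖ ^ 2 from by
        field_simp] at key
      have hεterm : -ε₁ * ‖Pinv (x t)‖ ^ 2 ≤ 0 := by nlinarith [sq_nonneg ‖Pinv (x t)‖]
      linarith [key, hεterm]
  -- conclusion
  have hg0 : g 0 = 0 := by
    simp [hg, hx0]
  have hgT : g T ≤ 0 := by
    have := hganti (Set.left_mem_Icc.mpr hT) (Set.right_mem_Icc.mpr hT) hT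
    rwa [hg0] at this
  have hVpos : 0 ≤ ⟪x T, Pinv (x T)⟫ := by
    have := hδcoer (x T)
    nlinarith [sq_nonneg ‖x T‖]
  have hfin : γ₁⁻¹ * (∫ s in (0:ℝ)..T, ‖z s‖ ^ 2) ≤ γ₁ * ∫ s in (0:ℝ)..T, ‖ω s‖ ^ 2 := by
    simp only [hg] at hgT
    linarith
  calc (∫ t in (0:ℝ)..T, ‖z t‖ ^ 2)
      = γ₁ * (γ₁⁻¹ * (∫ s in (0:ℝ)..T, ‖z s‖ ^ 2)) := by
        field_simp
    _ ≤ γ₁ * (γ₁ * ∫ s in (0:ℝ)..T, ‖ω s‖ ^ 2) :=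
        mul_le_mul_of_nonneg_left hfin hγ₁.le
    _ = γ₁ ^ 2 * ∫ t in (0:ℝ)..T, ‖ω t‖ ^ 2 := by ring
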